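/- Let s0 > 0. Then there exists a constant C (depending only on s0) such that for all s ≥ s0, ∫_{0}^{∞} (Φ'(z) - Φ'(z+s))² / ( (Φ(z+s) - Φ(z)) · (Φ(-z-s) + Φ(z)) ) dz ≤ C. -/

import Mathlib

open MeasureTheory Real Set Filter

/-- The standard normal density `Φ'(z) = (1/√(2π)) e^{-z²/2}`. -/
noncomputable def Φ' (z : ℝ) : ℝ := (Real.sqrt (2 * Real.pi))⁻¹ * Real.exp (-z ^ 2 / 2)

/-- The standard normal cumulative distribution function `Φ`. -/
noncomputable def Φ (z : ℝ) : ℝ := ∫ u in Set.Iic z, Φ' u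

lemma sqrt2pi_pos : 0 < Real.sqrt (2 * Real.pi) := Real.sqrt_pos.2 (by positivity)

lemma Φ'_pos (z : ℝ) : 0 < Φ' z :=
  mul_pos (inv_pos.2 sqrt2pi_pos) (Real.exp_pos _)

lemma Φ'_cont : Continuous Φ' := by
  unfold Φ'
  exact continuous_const.mul ((continuous_pow 2).neg.div_const 2).rexp

lemma Φ'_integrable : Integrable Φ' := by
  have h : Φ' = fun z : ℝ => (Real.sqrt (2 * Real.pi))⁻¹ *
      Real.exp (-(1/2 : ℝ) * z ^ 2) := by
    funext z
    rw [Φ', show -z ^ 2 / 2 = -(1/2 : ℝ) * z ^ 2 from by ring]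
  rw [h]
  exact (integrable_exp_neg_mul_sq (by norm_num : (0:ℝ) < 1/2)).const_mul _

lemma Φ'_le {a b : ℝ} (h : a ^ 2 ≤ b ^ 2) : Φ' b ≤ Φ' a := by
  rw [Φ', Φ']
  exact mul_le_mul_of_nonneg_left (Real.exp_le_exp.2 (by linarith))
    (inv_nonneg.2 (Real.sqrt_nonneg _))

lemma Φ_nonneg (z : ℝ) : 0 ≤ Φ z :=
  setIntegral_nonneg measurableSet_Iic fun u _ => (Φ'_pos u).le

lemma Φ_sub {a b : ℝ} (hab : a ≤ b) : Φ b - Φ a = ∫ u in Set.Ioc a b, Φ' u := by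
  rw [Φ, Φ, intervalIntegral.integral_Iic_sub_Iic Φ'_integrable.integrableOn Φ'_integrable.integrableOn,
    intervalIntegral.integral_of_le hab]

lemma Φ_mono {a b : ℝ} (hab : a ≤ b) : Φ a ≤ Φ b := by
  have h := Φ_sub hab
  have : 0 ≤ ∫ u in Set.Ioc a b, Φ' u :=
    setIntegral_nonneg measurableSet_Ioc fun u _ => (Φ'_pos u).le
  linarith

lemma integral_const_le_Φ_sub {a b c : ℝ} (hab : a ≤ b)
    (hc : ∀ u ∈ Set.Ioc a b, c ≤ Φ' u) : (b - a) * c ≤ Φ b - Φ a := by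
  rw [Φ_sub hab]
  have h1 : (∫ _ in Set.Ioc a b, c) = (b - a) * c := by
    rw [setIntegral_const, measureReal_def, Real.volume_Ioc, ENNReal.toReal_ofReal (by linarith),
      smul_eq_mul]
  rw [← h1]
  exact setIntegral_mono_on (integrableOn_const (by
      rw [Real.volume_Ioc]; exact ENNReal.ofReal_ne_top))
    Φ'_integrable.integrableOn measurableSet_Ioc hc

lemma Φ'_one_le_Φ_zero : Φ' 1 ≤ Φ 0 := by
  have h := integral_const_le_Φ_sub (by norm_num : (-1:ℝ) ≤ 0)
    (c := Φ' 1) (fun u hu => Φ'_le (by nlinarith [hu.1, hu.2]))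
  have h2 := Φ_nonneg (-1)
  linarith

lemma Φ'_one_le_Φ {z : ℝ} (hz : 0 ≤ z) : Φ' 1 ≤ Φ z :=
  Φ'_one_le_Φ_zero.trans (Φ_mono hz)

lemma Φ_cont : Continuous Φ := by
  have h : Φ = fun z => Φ 0 + ∫ u in (0:ℝ)..z, Φ' u := by
    funext z
    rw [← intervalIntegral.integral_Iic_sub_Iic Φ'_integrable.integrableOn
      Φ'_integrable.integrableOn]
    simp only [Φ]
    ring
  rw [h]
  exact continuous_const.add (Φ'_integrable.continuous_primitive 0)

/-- the integrals over `(0, ∞)` are uniformly bounded for `s ≥ s0 > 0`. -/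
theorem uniform_bound_Ioi (s0 : ℝ) (hs0 : 0 < s0) :
    ∃ C : ℝ, ∀ s : ℝ, s0 ≤ s →
      IntegrableOn (fun z : ℝ =>
        (Φ' z - Φ' (z + s)) ^ 2 / ((Φ (z + s) - Φ z) * (Φ (-z - s) + Φ z)))
        (Set.Ioi 0) volume ∧
      (∫ z in Set.Ioi (0:ℝ),
        (Φ' z - Φ' (z + s)) ^ 2 / ((Φ (z + s) - Φ z) * (Φ (-z - s) + Φ z))) ≤ C := by
  set m : ℝ := min s0 1 with hm
  have hm0 : 0 < m := lt_min hs0 one_pos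
  have hm1 : m ≤ 1 := min_le_right _ _
  set g : ℝ → ℝ := fun z => (Φ' z) ^ 2 / (m * Φ' (z + m) * Φ' 1) with hg
  -- g is integrable on Ioi 0
  have hgcont : Continuous g := by
    apply ((Φ'_cont.pow 2).div
      (((continuous_const.mul (Φ'_cont.comp (continuous_id.add continuous_const)))).mul
        continuous_const))
    intro z
    exact (mul_pos (mul_pos hm0 (Φ'_pos _)) (Φ'_pos 1)).ne'
  have hS : (0:ℝ) < (Real.sqrt (2 * Real.pi))⁻¹ := inv_pos.2 sqrt2pi_pos
  set K : ℝ := (Real.sqrt (2 * Real.pi))⁻¹ * Real.exp 2 / (m * Φ' 1) with hK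
  have hgbound : ∀ z : ℝ, 0 < z → g z ≤ K * Real.exp (-(1/4 : ℝ) * z ^ 2) := by
    intro z hz
    have hd : 0 < m * Φ' (z + m) * Φ' 1 := mul_pos (mul_pos hm0 (Φ'_pos _)) (Φ'_pos 1)
    have hexp : Real.exp (-z ^ 2 / 2) ^ 2 ≤
        Real.exp 2 * Real.exp (-(1/4 : ℝ) * z ^ 2) * Real.exp (-(z + m) ^ 2 / 2) := by
      rw [sq, ← Real.exp_add, ← Real.exp_add, ← Real.exp_add, Real.exp_le_exp]
      nlinarith [sq_nonneg (z - 2 * m), hm0.le, hm1]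
    show (Φ' z) ^ 2 / (m * Φ' (z + m) * Φ' 1) ≤ K * Real.exp (-(1/4 : ℝ) * z ^ 2)
    rw [div_le_iff₀ hd]
    calc (Φ' z) ^ 2
        = ((Real.sqrt (2 * Real.pi))⁻¹) ^ 2 * Real.exp (-z ^ 2 / 2) ^ 2 := by
          rw [Φ']; ring
      _ ≤ ((Real.sqrt (2 * Real.pi))⁻¹) ^ 2 *
          (Real.exp 2 * Real.exp (-(1/4 : ℝ) * z ^ 2) * Real.exp (-(z + m) ^ 2 / 2)) :=
          mul_le_mul_of_nonneg_left hexp (by positivity)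
      _ = K * Real.exp (-(1/4 : ℝ) * z ^ 2) * (m * Φ' (z + m) * Φ' 1) := by
          rw [hK]
          simp only [Φ']
          have h1 : Real.sqrt (2 * Real.pi) ≠ 0 := sqrt2pi_pos.ne'
          have h2 : m ≠ 0 := hm0.ne'
          have h3 : Real.exp (-(1:ℝ) ^ 2 / 2) ≠ 0 := Real.exp_ne_zero _
          field_simp
  have hgnonneg : ∀ z : ℝ, 0 ≤ g z := fun z =>
    div_nonneg (sq_nonneg _) (mul_pos (mul_pos hm0 (Φ'_pos _)) (Φ'_pos 1)).le
  have hdom : Integrable (fun z : ℝ => K * Real.exp (-(1/4 : ℝ) * z ^ 2)) :=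
    (integrable_exp_neg_mul_sq (by norm_num : (0:ℝ) < 1/4)).const_mul K
  have hgint : IntegrableOn g (Set.Ioi 0) volume := by
    refine Integrable.mono' hdom.integrableOn hgcont.aestronglyMeasurable.restrict ?_
    refine (ae_restrict_iff' measurableSet_Ioi).2 (Filter.Eventually.of_forall fun z hz => ?_)
    rw [Real.norm_eq_abs, abs_of_nonneg (hgnonneg z)]
    exact hgbound z hz
  refine ⟨∫ z in Set.Ioi (0:ℝ), g z, fun s hs => ?_⟩
  have hs' : 0 < s := lt_of_lt_of_le hs0 hs
  have hms : m ≤ s := le_trans (min_le_left _ _) hs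
  -- pointwise bound of the integrand by g
  have hfg : ∀ z : ℝ, 0 < z →
      (Φ' z - Φ' (z + s)) ^ 2 / ((Φ (z + s) - Φ z) * (Φ (-z - s) + Φ z)) ≤ g z := by
    intro z hz
    have hdpos : 0 < m * Φ' (z + m) * Φ' 1 := mul_pos (mul_pos hm0 (Φ'_pos _)) (Φ'_pos 1)
    have hden1 : m * Φ' (z + m) ≤ Φ (z + s) - Φ z := by
      have h1 := integral_const_le_Φ_sub (show z ≤ z + m by linarith)
        (c := Φ' (z + m)) (fun u hu => Φ'_le (by nlinarith [hu.1, hu.2]))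
      rw [add_sub_cancel_left] at h1
      have h2 := Φ_mono (show z + m ≤ z + s by linarith)
      linarith
    have hden2 : Φ' 1 ≤ Φ (-z - s) + Φ z := by
      have := Φ'_one_le_Φ hz.le
      have := Φ_nonneg (-z - s)
      linarith
    have hnum : (Φ' z - Φ' (z + s)) ^ 2 ≤ (Φ' z) ^ 2 := by
      have h1 : Φ' (z + s) ≤ Φ' z := Φ'_le (by nlinarith)
      have h2 : 0 < Φ' (z + s) := Φ'_pos _
      have h3 : 0 < Φ' z := Φ'_pos _
      apply sq_le_sq' <;> linarith
    exact div_le_div₀ (sq_nonneg _) hnum hdpos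
      (mul_le_mul hden1 hden2 (Φ'_pos 1).le
        (le_trans (mul_pos hm0 (Φ'_pos (z + m))).le hden1))
  have hfnonneg : ∀ z : ℝ, 0 < z →
      0 ≤ (Φ' z - Φ' (z + s)) ^ 2 / ((Φ (z + s) - Φ z) * (Φ (-z - s) + Φ z)) := by
    intro z hz
    refine div_nonneg (sq_nonneg _) (mul_nonneg ?_ ?_)
    · exact sub_nonneg.2 (Φ_mono (by linarith))
    · exact add_nonneg (Φ_nonneg _) (Φ_nonneg _)
  have hfmeas : Measurable (fun z : ℝ =>
      (Φ' z - Φ' (z + s)) ^ 2 / ((Φ (z + s) - Φ z) * (Φ (-z - s) + Φ z))) := by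
    have h1 : Measurable (fun z : ℝ => z + s) := measurable_id.add_const s
    have h2 : Measurable (fun z : ℝ => -z - s) := measurable_id.neg.sub_const s
    exact ((Φ'_cont.measurable.sub (Φ'_cont.measurable.comp h1)).pow_const 2).div
      (((Φ_cont.measurable.comp h1).sub Φ_cont.measurable).mul
        ((Φ_cont.measurable.comp h2).add Φ_cont.measurable))
  have hfint : IntegrableOn (fun z : ℝ =>
      (Φ' z - Φ' (z + s)) ^ 2 / ((Φ (z + s) - Φ z) * (Φ (-z - s) + Φ z)))
      (Set.Ioi 0) volume := by
    refine Integrable.mono' hgint hfmeas.aestronglyMeasurable.restrict ?_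
    refine (ae_restrict_iff' measurableSet_Ioi).2 (Filter.Eventually.of_forall fun z hz => ?_)
    rw [Real.norm_eq_abs, abs_of_nonneg (hfnonneg z hz)]
    exact hfg z hz
  exact ⟨hfint, setIntegral_mono_on hfint hgint measurableSet_Ioi fun z hz => hfg z hz⟩
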